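/- Let k be a field with finite d-th level s_d(k) < ∞ and suppose the quotient group k×/(k×)^d is finite of order N. Then every anisotropic diagonal form ⟨a₁,...,a_m⟩ of degree d over k satisfies m ≤ N. In other words, u_diag(d,k) ≤ |k×/(k×)^d|. -/
import Mathlib


theorem stmt_13 {k : Type*} [Field k] (d : ℕ) (hd : 0 < d)
    (hlevel : ∃ s : ℕ, 0 < s ∧ ∃ a : Fin s → k, ∑ i, a i ^ d = -1)
    (N : ℕ) [Finite (kˣ ⧸ (powMonoidHom d : kˣ →* kˣ).range)]
    (hN : Nat.card (kˣ ⧸ (powMonoidHom d : kˣ →* kˣ).range) = N)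
    (m : ℕ) (a : Fin m → k) (ha : ∀ i, a i ≠ 0)
    (haniso : ∀ x : Fin m → k, ∑ i, a i * x i ^ d = 0 → x = 0) :
    m ≤ N := by
  classical
  obtain ⟨s, hs, b, hb⟩ := hlevel
  -- D j : values represented by the first j variables with nonzero input
  set D : ℕ → Set k := fun j =>
    { v | ∃ x : Fin m → k, x ≠ 0 ∧ (∀ i : Fin m, j ≤ (i : ℕ) → x i = 0) ∧
        v = ∑ i, a i * x i ^ d } with hDdef
  have hD0 : ∀ j, (0 : k) ∉ D j := by
    rintro j ⟨x, hx, -, hsum⟩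
    exact hx (haniso x hsum.symm)
  have hDmul : ∀ j (v c : k), c ≠ 0 → v ∈ D j → v * c ^ d ∈ D j := by
    rintro j v c hc ⟨x, hx, hxj, rfl⟩
    refine ⟨fun i => x i * c, ?_, fun i hi => by show x i * c = 0; rw [hxj i hi, zero_mul], ?_⟩
    · intro h
      apply hx
      funext i
      have := congrFun h i
      simp only [Pi.zero_apply] at this ⊢
      rcases mul_eq_zero.mp this with h' | h'
      · exact h'
      · exact absurd h' hc
    · rw [Finset.sum_mul]
      exact Finset.sum_congr rfl fun i _ => by ring
  have hDsub : ∀ j, D j ⊆ D (j + 1) := by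
    rintro j v ⟨x, hx, hxj, rfl⟩
    exact ⟨x, hx, fun i hi => hxj i (by omega), rfl⟩
  have hstep : ∀ j (hj : j < m), ∀ v ∈ D j, ∀ t : k,
      v + a ⟨j, hj⟩ * t ^ d ∈ D (j + 1) := by
    rintro j hj v ⟨x, hx, hxj, rfl⟩ t
    set p : Fin m := ⟨j, hj⟩ with hp
    have hxp : x p = 0 := hxj p le_rfl
    refine ⟨Function.update x p t, ?_, ?_, ?_⟩
    · obtain ⟨i, hi⟩ := Function.ne_iff.mp hx
      have hip : i ≠ p := fun h => hi (h ▸ hxp)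
      intro h
      have := congrFun h i
      rw [Function.update_of_ne hip] at this
      exact hi this
    · intro i hi
      have hij : (i : ℕ) ≠ j := by omega
      have hip : i ≠ p := by
        intro h
        exact hij (by rw [h])
      rw [Function.update_of_ne hip]
      exact hxj i (by omega)
    · have hfun : ∀ i, a i * (Function.update x p t) i ^ d =
          Function.update (fun i => a i * x i ^ d) p (a p * t ^ d) i := by
        intro i
        by_cases h : i = p
        · subst h; simp
        · rw [Function.update_of_ne h, Function.update_of_ne h]
      rw [Finset.sum_congr rfl fun i _ => hfun i,
        Finset.sum_update_of_mem (Finset.mem_univ p)]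
      have hrest : ∑ i ∈ Finset.univ \ {p}, (a i * x i ^ d) = ∑ i, a i * x i ^ d := by
        apply Finset.sum_subset (Finset.subset_univ _)
        intro i _ hi
        have : i = p := by simpa using hi
        rw [this, hxp, zero_pow hd.ne', mul_zero]
      rw [hrest]
      ring
  -- classes of represented values in the quotient group
  set S : ℕ → Set (kˣ ⧸ (powMonoidHom d : kˣ →* kˣ).range) := fun j =>
    { q | ∃ u : kˣ, (u : k) ∈ D j ∧ (QuotientGroup.mk u : kˣ ⧸ (powMonoidHom d : kˣ →* kˣ).range) = q }
    with hSdef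
  have hSsub : ∀ j, S j ⊆ S (j + 1) := by
    rintro j q ⟨u, hu, rfl⟩
    exact ⟨u, hDsub j hu, rfl⟩
  have hDdown : ∀ j, S (j + 1) ⊆ S j → D (j + 1) ⊆ D j := by
    intro j hS v hv
    have hv0 : v ≠ 0 := fun h => hD0 (j + 1) (h ▸ hv)
    set u : kˣ := Units.mk0 v hv0 with hu
    have hmem : (QuotientGroup.mk u : kˣ ⧸ (powMonoidHom d : kˣ →* kˣ).range) ∈ S (j + 1) := by
      exact ⟨u, by simpa [hu] using hv, rfl⟩
    obtain ⟨u', hu', hq'⟩ := hS hmem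
    have hin : u'⁻¹ * u ∈ (powMonoidHom d : kˣ →* kˣ).range := QuotientGroup.eq.mp hq'
    obtain ⟨c, hc⟩ := hin
    have hceq : (u : kˣ) = u' * c ^ d := by
      have : c ^ d = u'⁻¹ * u := hc
      rw [this]
      group
    have hvk : v = (u' : k) * (c : k) ^ d := by
      have := congrArg (Units.val) hceq
      simpa [hu] using this
    rw [hvk]
    exact hDmul j _ _ c.ne_zero hu'
  have hstrict : ∀ j, j < m → ¬ S (j + 1) ⊆ S j := by
    intro j hj hcon
    have hDd := hDdown j hcon
    set p : Fin m := ⟨j, hj⟩ with hp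
    have hap : a p ∈ D (j + 1) := by
      refine ⟨Function.update (0 : Fin m → k) p 1, ?_, ?_, ?_⟩
      · intro h
        have := congrFun h p
        rw [Function.update_self] at this
        exact one_ne_zero this
      · intro i hi
        have hij : (i : ℕ) ≠ j := by omega
        have hip : i ≠ p := by
          intro h
          exact hij (by rw [h])
        rw [Function.update_of_ne hip]
        rfl
      · have hfun : ∀ i, a i * (Function.update (0 : Fin m → k) p 1) i ^ d =
            Function.update (0 : Fin m → k) p (a p) i := by
          intro i
          by_cases h : i = p
          · subst h; simp
          · rw [Function.update_of_ne h, Function.update_of_ne h]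
            simp [zero_pow hd.ne']
        rw [Finset.sum_congr rfl fun i _ => hfun i,
          Finset.sum_update_of_mem (Finset.mem_univ p)]
        simp
    set b' : ℕ → k := fun i => if h : i < s then b ⟨i, h⟩ else 0 with hb'def
    have hb' : ∑ i ∈ Finset.range s, b' i ^ d = -1 := by
      rw [← Fin.sum_univ_eq_sum_range]
      rw [show ∑ i : Fin s, b' (i : ℕ) ^ d = ∑ i : Fin s, b i ^ d from
        Finset.sum_congr rfl fun i _ => by simp [hb'def, i.isLt]]
      exact hb
    have key : ∀ r, r ≤ s → a p * (1 + ∑ i ∈ Finset.range r, b' i ^ d) ∈ D j := by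
      intro r
      induction r with
      | zero => intro _; simpa using hDd hap
      | succ r ih =>
        intro hr
        have h1 := hDd (hstep j hj _ (ih (by omega)) (b' r))
        have heq : a p * (1 + ∑ i ∈ Finset.range (r + 1), b' i ^ d) =
            a p * (1 + ∑ i ∈ Finset.range r, b' i ^ d) + a p * b' r ^ d := by
          rw [Finset.sum_range_succ]; ring
        rw [heq]
        exact h1
    have h0 : (0 : k) ∈ D j := by
      have := key s le_rfl
      rw [hb'] at this
      simpa using this
    exact hD0 j h0
  have hmono : ∀ j, j ≤ m → j ≤ (S j).ncard := by
    intro j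
    induction j with
    | zero => intro _; exact Nat.zero_le _
    | succ j ih =>
      intro hj
      have h1 : S j ⊂ S (j + 1) := ⟨hSsub j, hstrict j (by omega)⟩
      have h2 : (S j).ncard < (S (j + 1)).ncard :=
        Set.ncard_lt_ncard h1 (Set.toFinite _)
      have := ih (by omega)
      omega
  have h3 := hmono m le_rfl
  have h4 : (S m).ncard ≤ N := by
    rw [← hN, ← Set.ncard_univ]
    exact Set.ncard_le_ncard (Set.subset_univ _) (Set.toFinite _)
  omega
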